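/- In the game 6-Sim, consider the position consisting of a drawn K_5 on 5 of the 6 vertices, with all edges incident to the sixth vertex uncolored and PI to move. Then PII has a winning strategy from this position. -/
import Mathlib


/-- The set of valid (non-loop) edges of the complete graph on `Fin n`. -/
def simEdges (n : ℕ) : Finset (Sym2 (Fin n)) :=
  Finset.univ.filter (fun e => ¬ e.IsDiag)

/-- An edge set `S` contains a triangle: three edges of `S` spanned by three
distinct vertices. -/
def HasTriangle {n : ℕ} (S : Finset (Sym2 (Fin n))) : Prop :=
  ∃ a b c : Fin n, a ≠ b ∧ a ≠ c ∧ b ≠ c ∧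
    s(a, b) ∈ S ∧ s(a, c) ∈ S ∧ s(b, c) ∈ S

/-- The uncolored edges, given the two players' edge sets. -/
def avail {n : ℕ} (A B : Finset (Sym2 (Fin n))) : Finset (Sym2 (Fin n)) :=
  simEdges n \ (A ∪ B)

/-- `MoverWins own opp` : in the game of n-Sim (players alternately claim an
uncolored edge of `K n`, and whoever first has a triangle in their own edges
loses), the player about to move, whose already-claimed edges are `own` while
the opponent's are `opp`, has a winning strategy.

The mover wins iff they can claim some uncolored edge `e` not creating a
triangle in their own color, so that afterwards the opponent still has to move
(there is an uncolored edge left; otherwise the game is a draw), and every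
reply `f` of the opponent either completes a triangle in the opponent's color
(so the opponent loses) or leads to a position where the original mover again
wins. -/
inductive MoverWins {n : ℕ} : Finset (Sym2 (Fin n)) → Finset (Sym2 (Fin n)) → Prop where
  | step (own opp : Finset (Sym2 (Fin n))) (e : Sym2 (Fin n))
      (he : e ∈ avail own opp)
      (hsafe : ¬ HasTriangle (insert e own))
      (hne : (avail opp (insert e own)).Nonempty)
      (hreplies : ∀ f ∈ avail opp (insert e own), ¬ HasTriangle (insert f opp) →
        MoverWins (insert e own) (insert f opp)) :
      MoverWins own opp

/-- `NonMoverWins own opp` : the player NOT about to move (the one whose edges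
are `opp`) has a winning strategy: there is at least one uncolored edge (the
mover must move), and every non-losing move of the mover leads to a position
won by the (new) mover, i.e. by the original non-mover. -/
def NonMoverWins {n : ℕ} (own opp : Finset (Sym2 (Fin n))) : Prop :=
  (avail own opp).Nonempty ∧
    ∀ e ∈ avail own opp, ¬ HasTriangle (insert e own) →
      MoverWins opp (insert e own)

/-- The green edges of a drawn `K₅` on the five distinct vertices
`v 0, …, v 4`: the pentagon `v i — v (i+1)`. -/
def greenK5 {n : ℕ} (v : Fin 5 → Fin n) : Finset (Sym2 (Fin n)) :=
  Finset.univ.image (fun i : Fin 5 => s(v i, v (i + 1)))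

/-- The red edges of a drawn `K₅` on the five distinct vertices
`v 0, …, v 4`: the complementary pentagram `v i — v (i+2)`. -/
def redK5 {n : ℕ} (v : Fin 5 → Fin n) : Finset (Sym2 (Fin n)) :=
  Finset.univ.image (fun i : Fin 5 => s(v i, v (i + 2)))

-- auxiliary

instance decHT {n : ℕ} (S : Finset (Sym2 (Fin n))) : Decidable (HasTriangle S) := by
  unfold HasTriangle; infer_instance

def mwf {n : ℕ} : ℕ → Finset (Sym2 (Fin n)) → Finset (Sym2 (Fin n)) → Bool
  | 0, _, _ => false
  | (k+1), own, opp =>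
    decide (∃ e ∈ avail own opp,
      ¬ HasTriangle (insert e own) ∧
      (avail opp (insert e own)).Nonempty ∧
      ∀ f ∈ avail opp (insert e own),
        HasTriangle (insert f opp) ∨ mwf k (insert e own) (insert f opp) = true)

lemma mwf_sound {n : ℕ} :
    ∀ (k : ℕ) (own opp : Finset (Sym2 (Fin n))), mwf k own opp = true → MoverWins own opp := by
  intro k
  induction k with
  | zero => intro own opp h; simp [mwf] at h
  | succ k ih =>
    intro own opp h
    rw [mwf, decide_eq_true_iff] at h
    obtain ⟨e, he, hsafe, hne, hrep⟩ := h
    exact MoverWins.step own opp e he hsafe hne (fun f hf hfs => by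
      rcases hrep f hf with h' | h'
      · exact absurd h' hfs
      · exact ih _ _ h')

section Equivariance

variable {n : ℕ} (σ : Equiv.Perm (Fin n))

lemma image_simEdges : (simEdges n).image (Sym2.map σ) = simEdges n := by
  ext e
  simp only [simEdges, Finset.mem_image, Finset.mem_filter, Finset.mem_univ, true_and]
  constructor
  · rintro ⟨a, ha, rfl⟩
    rwa [Sym2.isDiag_map σ.injective]
  · intro he
    refine ⟨e.map σ.symm, by rwa [Sym2.isDiag_map σ.symm.injective], ?_⟩
    rw [Sym2.map_map]
    simp

lemma image_avail (A B : Finset (Sym2 (Fin n))) :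
    (avail A B).image (Sym2.map σ) = avail (A.image (Sym2.map σ)) (B.image (Sym2.map σ)) := by
  unfold avail
  rw [Finset.image_sdiff _ _ (Sym2.map.injective σ.injective), Finset.image_union,
    image_simEdges]

lemma hasTriangle_image_of (S : Finset (Sym2 (Fin n))) (h : HasTriangle S) :
    HasTriangle (S.image (Sym2.map σ)) := by
  obtain ⟨a, b, c, hab, hac, hbc, h1, h2, h3⟩ := h
  exact ⟨σ a, σ b, σ c, σ.injective.ne hab, σ.injective.ne hac, σ.injective.ne hbc,
    Finset.mem_image_of_mem _ h1, Finset.mem_image_of_mem _ h2, Finset.mem_image_of_mem _ h3⟩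

lemma image_image_symm (S : Finset (Sym2 (Fin n))) :
    (S.image (Sym2.map σ)).image (Sym2.map σ.symm) = S := by
  rw [Finset.image_image]
  have : (Sym2.map (σ.symm) ∘ Sym2.map σ) = id := by
    funext e
    simp [Function.comp, Sym2.map_map]
  rw [this, Finset.image_id]

lemma hasTriangle_image_iff (S : Finset (Sym2 (Fin n))) :
    HasTriangle (S.image (Sym2.map σ)) ↔ HasTriangle S := by
  constructor
  · intro h
    have := hasTriangle_image_of σ.symm _ h
    rwa [image_image_symm] at this
  · exact hasTriangle_image_of σ S

lemma moverWins_image {A B : Finset (Sym2 (Fin n))} (h : MoverWins A B) :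
    MoverWins (A.image (Sym2.map σ)) (B.image (Sym2.map σ)) := by
  induction h with
  | step own opp e he hsafe hne hreplies ih =>
    refine MoverWins.step _ _ (Sym2.map σ e) ?_ ?_ ?_ ?_
    · rw [← image_avail]
      exact Finset.mem_image_of_mem _ he
    · rw [← Finset.image_insert, hasTriangle_image_iff]
      exact hsafe
    · rw [← Finset.image_insert, ← image_avail]
      exact hne.image _
    · intro f hf hfs
      rw [← Finset.image_insert, ← image_avail] at hf
      obtain ⟨f₀, hf₀, rfl⟩ := Finset.mem_image.mp hf
      rw [← Finset.image_insert, hasTriangle_image_iff] at hfs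
      have := ih f₀ hf₀ hfs
      rwa [Finset.image_insert, Finset.image_insert] at this

lemma nonMoverWins_image {A B : Finset (Sym2 (Fin n))} (h : NonMoverWins A B) :
    NonMoverWins (A.image (Sym2.map σ)) (B.image (Sym2.map σ)) := by
  obtain ⟨hne, hmov⟩ := h
  refine ⟨by rw [← image_avail]; exact hne.image _, ?_⟩
  intro e he hs
  rw [← image_avail] at he
  obtain ⟨e₀, he₀, rfl⟩ := Finset.mem_image.mp he
  rw [← Finset.image_insert, hasTriangle_image_iff] at hs
  have := moverWins_image σ (hmov e₀ he₀ hs)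
  rwa [Finset.image_insert] at this

end Equivariance

def v0 : Fin 5 → Fin 6 := fun i => ⟨i, by omega⟩

set_option maxRecDepth 20000 in
lemma canonical_nonMoverWins : NonMoverWins (greenK5 v0) (redK5 v0) := by
  constructor
  · decide
  · intro e he hs
    have H : ∀ e ∈ avail (greenK5 v0) (redK5 v0), ¬ HasTriangle (insert e (greenK5 v0)) →
        mwf 5 (redK5 v0) (insert e (greenK5 v0)) = true := by decide
    exact mwf_sound 5 _ _ (H e he hs)

lemma exists_perm (v : Fin 5 → Fin 6) (hv : Function.Injective v) :
    ∃ σ : Equiv.Perm (Fin 6), ∀ i, σ (v0 i) = v i := by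
  classical
  have hcard : (Finset.univ.image v).card = 5 := by
    rw [Finset.card_image_of_injective _ hv, Finset.card_univ]; rfl
  have hne : (Finset.univ \ Finset.univ.image v).Nonempty := by
    rw [← Finset.card_pos, Finset.card_sdiff_of_subset (Finset.subset_univ _), hcard]
    simp
  obtain ⟨w, hw⟩ := hne
  have hw' : w ∉ Finset.univ.image v := (Finset.mem_sdiff.mp hw).2
  set f : Fin 6 → Fin 6 := fun j => if h : (j : ℕ) < 5 then v ⟨j, h⟩ else w with hf
  have hinj : Function.Injective f := by
    intro j1 j2 h
    simp only [hf] at h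
    by_cases h1 : (j1 : ℕ) < 5 <;> by_cases h2 : (j2 : ℕ) < 5
    · rw [dif_pos h1, dif_pos h2] at h
      have := hv h
      have := Fin.mk.inj_iff.mp this
      exact Fin.ext this
    · rw [dif_pos h1, dif_neg h2] at h
      exact absurd (Finset.mem_image_of_mem v (Finset.mem_univ _)) (h ▸ hw')
    · rw [dif_neg h1, dif_pos h2] at h
      exact absurd (Finset.mem_image_of_mem v (Finset.mem_univ _)) (h.symm ▸ hw')
    · have e1 : (j1 : ℕ) = 5 := by omega
      have e2 : (j2 : ℕ) = 5 := by omega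
      exact Fin.ext (e1.trans e2.symm)
  refine ⟨Equiv.ofBijective f (Finite.injective_iff_bijective.mp hinj), fun i => ?_⟩
  show f (v0 i) = v i
  have hlt : ((v0 i : Fin 6) : ℕ) < 5 := i.isLt
  simp only [hf]
  rw [dif_pos hlt]
  congr 1

lemma greenK5_eq (v : Fin 5 → Fin 6) (σ : Equiv.Perm (Fin 6)) (hσ : ∀ i, σ (v0 i) = v i) :
    greenK5 v = (greenK5 v0).image (Sym2.map σ) := by
  unfold greenK5
  rw [Finset.image_image]
  congr 1
  funext i
  simp [Function.comp, Sym2.map_pair_eq, hσ]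

lemma redK5_eq (v : Fin 5 → Fin 6) (σ : Equiv.Perm (Fin 6)) (hσ : ∀ i, σ (v0 i) = v i) :
    redK5 v = (redK5 v0).image (Sym2.map σ) := by
  unfold redK5
  rw [Finset.image_image]
  congr 1
  funext i
  simp [Function.comp, Sym2.map_pair_eq, hσ]


/-- **Proposition (i), case `n = 6`.** In 6-Sim, the position consisting of a
drawn `K₅` on five of the six vertices, all edges at the sixth vertex
uncolored, with PI (green) to move, is a win for PII (the non-mover). -/
theorem drawn_K5_in_sixSim_secondPlayerWin (v : Fin 5 → Fin 6)
    (hv : Function.Injective v) :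
    NonMoverWins (greenK5 v) (redK5 v) := by
  obtain ⟨σ, hσ⟩ := exists_perm v hv
  rw [greenK5_eq v σ hσ, redK5_eq v σ hσ]
  exact nonMoverWins_image σ canonical_nonMoverWins
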